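/- arXiv:1502.01992 — 3 statements merged into one kernel-verified Lean document; each statement's English description precedes it below -/
import Mathlib

section
/- Let H be a Hilbert space and A : [-1,1] → (H →L[ℝ] H) a family of bounded operators such that for all x, y ∈ H the function t ↦ ⟪A t x, y⟫ is real analytic, and such that sup over t of the rank of A t is finite, say equal to n₀. Then the set {t ∈ [-1,1] : rank (A t) < n₀} has no accumulation points in [-1,1]. -/
theorem stmt_3 {H : Type*} [NormedAddCommGroup H] [InnerProductSpace ℝ H]
    [CompleteSpace H]
    (A : ℝ → H →L[ℝ] H)
    (hfin : ∀ t, FiniteDimensional ℝ (LinearMap.range (A t : H →ₗ[ℝ] H)))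
    (hA : ∀ x y : H, AnalyticOnNhd ℝ (fun t => (inner ℝ (A t x) y : ℝ)) (Set.Icc (-1 : ℝ) 1))
    (n₀ : ℕ)
    (hub : ∀ t ∈ Set.Icc (-1 : ℝ) 1, Module.finrank ℝ (LinearMap.range (A t : H →ₗ[ℝ] H)) ≤ n₀)
    (hsup : ∃ t ∈ Set.Icc (-1 : ℝ) 1, Module.finrank ℝ (LinearMap.range (A t : H →ₗ[ℝ] H)) = n₀) :
    ∀ t ∈ Set.Icc (-1 : ℝ) 1,
      ¬ AccPt t (Filter.principal
        {s ∈ Set.Icc (-1 : ℝ) 1 | Module.finrank ℝ (LinearMap.range (A s : H →ₗ[ℝ] H)) < n₀}) := by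
  obtain ⟨t₀, ht₀, hr⟩ := hsup
  haveI := hfin t₀
  let b := (stdOrthonormalBasis ℝ (LinearMap.range (A t₀ : H →ₗ[ℝ] H))).reindex (finCongr hr)
  have hx : ∀ i : Fin n₀, ∃ x : H, A t₀ x = (b i : H) := fun i => (b i).2
  choose x hxA using hx
  set f : ℝ → ℝ := fun t =>
    Matrix.det (Matrix.of fun i j : Fin n₀ => (inner ℝ (A t (x i)) ((b j : H)) : ℝ)) with hf
  have hfeq : f = fun t => ∑ σ : Equiv.Perm (Fin n₀),
      ((Equiv.Perm.sign σ : ℤ) : ℝ) * ∏ i, (inner ℝ (A t (x (σ i))) ((b i : H)) : ℝ) := by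
    funext t
    show (Matrix.of fun i j : Fin n₀ => (inner ℝ (A t (x i)) ((b j : H)) : ℝ)).det = _
    rw [Matrix.det_apply]
    simp [Matrix.of_apply, Units.smul_def, zsmul_eq_mul]
  have hfa : AnalyticOnNhd ℝ f (Set.Icc (-1 : ℝ) 1) := by
    rw [hfeq]
    have e : (fun t => ∑ σ : Equiv.Perm (Fin n₀),
        ((Equiv.Perm.sign σ : ℤ) : ℝ) * ∏ i, (inner ℝ (A t (x (σ i))) ((b i : H)) : ℝ)) =
        ∑ σ : Equiv.Perm (Fin n₀), fun t =>
        ((Equiv.Perm.sign σ : ℤ) : ℝ) * ∏ i, (inner ℝ (A t (x (σ i))) ((b i : H)) : ℝ) := by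
      funext t; simp [Finset.sum_apply]
    rw [e]
    apply Finset.analyticOnNhd_sum
    intro σ _
    exact analyticOnNhd_const.mul
      (Finset.analyticOnNhd_fun_prod _ (fun i _ => hA (x (σ i)) ((b i : H))))
  have hft₀ : f t₀ = 1 := by
    have h1 : (Matrix.of fun i j : Fin n₀ => (inner ℝ (A t₀ (x i)) ((b j : H)) : ℝ)) = 1 := by
      ext i j
      rw [Matrix.of_apply, hxA]
      have hob := b.orthonormal
      rw [orthonormal_iff_ite] at hob
      have := hob i j
      rw [Submodule.coe_inner] at this
      simpa [Matrix.one_apply] using this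
    show (Matrix.of fun i j : Fin n₀ => (inner ℝ (A t₀ (x i)) ((b j : H)) : ℝ)).det = 1
    rw [h1, Matrix.det_one]
  have hzero : ∀ s, Module.finrank ℝ (LinearMap.range (A s : H →ₗ[ℝ] H)) < n₀ → f s = 0 := by
    intro s hs
    haveI := hfin s
    set w : Fin n₀ → LinearMap.range (A s : H →ₗ[ℝ] H) :=
      fun i => ⟨A s (x i), LinearMap.mem_range_self _ _⟩ with hw
    have hnli : ¬ LinearIndependent ℝ w := by
      intro h
      have := h.fintype_card_le_finrank
      simp only [Fintype.card_fin] at this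
      omega
    rw [Fintype.not_linearIndependent_iff] at hnli
    obtain ⟨g, hg, i₀, hi₀⟩ := hnli
    show (Matrix.of fun i j : Fin n₀ => (inner ℝ (A s (x i)) ((b j : H)) : ℝ)).det = 0
    apply Matrix.exists_vecMul_eq_zero_iff.mp
    refine ⟨g, fun hgz => hi₀ (by rw [hgz]; rfl), ?_⟩
    funext j
    have hsum : (∑ i, g i • (A s (x i))) = 0 := by
      have := congrArg (Subtype.val) hg
      simpa [hw] using this
    calc (Matrix.vecMul g (Matrix.of fun i j : Fin n₀ =>
            (inner ℝ (A s (x i)) ((b j : H)) : ℝ))) j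
        = ∑ i, g i * (inner ℝ (A s (x i)) ((b j : H)) : ℝ) := by
          simp [Matrix.vecMul, dotProduct]
      _ = (inner ℝ (∑ i, g i • (A s (x i))) ((b j : H)) : ℝ) := by
          rw [sum_inner]
          simp [real_inner_smul_left]
      _ = 0 := by rw [hsum, inner_zero_left]
  intro t ht hacc
  rw [accPt_iff_frequently] at hacc
  have hfreq : ∃ᶠ z in nhdsWithin t {t}ᶜ, f z = 0 := by
    rw [frequently_nhdsWithin_iff]
    apply hacc.mono
    rintro y ⟨hy, hyS⟩
    exact ⟨hzero y hyS.2, hy⟩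
  have hEq := hfa.eqOn_zero_of_preconnected_of_frequently_eq_zero isPreconnected_Icc ht hfreq
  have h0 := hEq ht₀
  rw [hft₀] at h0
  exact one_ne_zero h0
end

section
/- Let H be a Hilbert space and P : ℝ → (H →L[ℝ] H) a family of symmetric bounded operators. Fix t₀ ∈ ℝ and suppose: (i) there is c > 0 with ‖P t - P t₀‖ ≤ c·|t - t₀| for all t; (ii) there is a function η : ℝ → ℝ with η s → ∞ as s → 0⁺ such that for all t ≠ t₀ and all f ⊥ ker (P t), |t - t₀| · η(|t - t₀|) · ‖f‖ ≤ ‖P t f‖. Let f₀ ∈ ker (P t₀) with f₀ ≠ 0, and let u : ℝ → H satisfy u t₀ = f₀ and ‖u t - f₀‖ ≤ c·|t - t₀|. Then for all t ≠ t₀ sufficiently close to t₀, u t is not orthogonal to ker (P t). -/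
theorem stmt_5 {H : Type*} [NormedAddCommGroup H] [InnerProductSpace ℝ H]
    [CompleteSpace H]
    (P : ℝ → H →L[ℝ] H)
    (hsym : ∀ t, ∀ x y : H, (inner ℝ (P t x) y : ℝ) = inner ℝ x (P t y))
    (t₀ : ℝ) (c : ℝ) (hc : 0 < c)
    (hlip : ∀ t, ‖P t - P t₀‖ ≤ c * |t - t₀|)
    (η : ℝ → ℝ) (hη : Filter.Tendsto η (nhdsWithin 0 (Set.Ioi 0)) Filter.atTop)
    (hgap : ∀ t, t ≠ t₀ → ∀ f ∈ (LinearMap.ker (P t : H →ₗ[ℝ] H))ᗮ,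
      |t - t₀| * η |t - t₀| * ‖f‖ ≤ ‖P t f‖)
    (f₀ : H) (hf₀ : f₀ ∈ LinearMap.ker (P t₀ : H →ₗ[ℝ] H)) (hf₀ne : f₀ ≠ 0)
    (u : ℝ → H) (hu₀ : u t₀ = f₀) (hu : ∀ t, ‖u t - f₀‖ ≤ c * |t - t₀|) :
    ∃ δ > 0, ∀ t, t ≠ t₀ → |t - t₀| < δ → u t ∉ (LinearMap.ker (P t : H →ₗ[ℝ] H))ᗮ := by
  have hf₀pos : 0 < ‖f₀‖ := norm_pos_iff.mpr hf₀ne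
  set K₀ : ℝ := (‖P t₀‖ + c) * c + c * ‖f₀‖ with hK₀
  have hK₀nn : 0 ≤ K₀ := by positivity
  set K : ℝ := 2 * K₀ / ‖f₀‖ with hK
  have hev : ∀ᶠ s in nhdsWithin 0 (Set.Ioi 0), K < η s :=
    hη.eventually (Filter.eventually_gt_atTop K)
  rw [eventually_nhdsWithin_iff, Metric.eventually_nhds_iff] at hev
  obtain ⟨δ₁, hδ₁pos, hδ₁⟩ := hev
  refine ⟨min δ₁ (min 1 (‖f₀‖ / (2 * c))), by positivity, ?_⟩
  intro t hne hlt hperp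
  set s : ℝ := |t - t₀| with hs
  have hspos : 0 < s := abs_pos.mpr (sub_ne_zero.mpr hne)
  have hs1 : s ≤ 1 := le_of_lt (lt_of_lt_of_le hlt (le_trans (min_le_right _ _) (min_le_left _ _)))
  have hsf : c * s ≤ ‖f₀‖ / 2 := by
    have : s ≤ ‖f₀‖ / (2 * c) :=
      le_of_lt (lt_of_lt_of_le hlt (le_trans (min_le_right _ _) (min_le_right _ _)))
    calc c * s ≤ c * (‖f₀‖ / (2 * c)) := by nlinarith
    _ = ‖f₀‖ / 2 := by field_simp
  have hsδ₁ : s < δ₁ := lt_of_lt_of_le hlt (min_le_left _ _)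
  have hηs : K < η s := by
    apply hδ₁ _ hspos
    simpa [Real.dist_eq, abs_of_pos hspos] using hsδ₁
  -- lower bound on ‖u t‖
  have hun : ‖f₀‖ / 2 ≤ ‖u t‖ := by
    have h1 : ‖f₀‖ - ‖u t‖ ≤ ‖u t - f₀‖ := by
      have := norm_sub_norm_le (u t - f₀) (u t)
      simpa [norm_sub_rev] using norm_sub_norm_le f₀ (u t)
    have := hu t
    linarith
  -- upper bound on ‖P t (u t)‖
  have hPf₀ : P t₀ f₀ = 0 := hf₀
  have hPt : ‖P t‖ ≤ ‖P t₀‖ + c * s := by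
    have := hlip t
    have h2 := norm_sub_norm_le (P t) (P t₀)
    linarith
  have hup : ‖P t (u t)‖ ≤ s * K₀ := by
    have heq : P t (u t) = P t (u t - f₀) + (P t - P t₀) f₀ := by
      simp [map_sub, hPf₀]
    calc ‖P t (u t)‖ = ‖P t (u t - f₀) + (P t - P t₀) f₀‖ := by rw [heq]
      _ ≤ ‖P t (u t - f₀)‖ + ‖(P t - P t₀) f₀‖ := norm_add_le _ _
      _ ≤ ‖P t‖ * ‖u t - f₀‖ + ‖P t - P t₀‖ * ‖f₀‖ := by
          gcongr <;> exact ContinuousLinearMap.le_opNorm _ _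
      _ ≤ (‖P t₀‖ + c * s) * (c * s) + (c * s) * ‖f₀‖ := by
          have hPnn : (0:ℝ) ≤ ‖P t₀‖ := norm_nonneg _
          gcongr
          · exact hu t
          · exact hlip t
      _ ≤ s * K₀ := by rw [hK₀]; nlinarith [norm_nonneg (P t₀), mul_nonneg (mul_nonneg hc.le hc.le) (mul_nonneg hspos.le (sub_nonneg.mpr hs1))]
  have hlow := hgap t hne (u t) hperp
  have hKnn : 0 ≤ K := by positivity
  have hηpos : 0 < η s := lt_of_le_of_lt hKnn hηs
  have : s * η s * (‖f₀‖ / 2) ≤ s * K₀ := by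
    calc s * η s * (‖f₀‖ / 2) ≤ s * η s * ‖u t‖ := by
          have : 0 ≤ s * η s := by positivity
          nlinarith
      _ ≤ ‖P t (u t)‖ := hlow
      _ ≤ s * K₀ := hup
  have hηK : η s ≤ K := by
    rw [hK]
    rw [le_div_iff₀ hf₀pos]
    nlinarith
  linarith
end

section
/- Let H be a Hilbert space, P : ℝ → (H →L[ℝ] H), t₀ ∈ ℝ, and constants c > 0. Assume: (i) ‖P t - P t₀‖ ≤ c·|t - t₀| for all t; (ii) there is η : ℝ → ℝ with η s → ∞ as s → 0⁺ such that for all t ≠ t₀ and all v ⊥ ker (P t), |t - t₀| · η(|t - t₀|) · ‖v‖ ≤ ‖P t v‖. Let f₀ ∈ ker (P t₀), u : ℝ → H with ‖u t - f₀‖ ≤ c·|t - t₀|, and suppose u t = v t + ψ t with ψ t ∈ ker (P t) and v t ⊥ ker (P t). Then ‖v t‖ → 0 and ‖f₀ - ψ t‖ → 0 as t → t₀. -/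
theorem stmt_6 {H : Type*} [NormedAddCommGroup H] [InnerProductSpace ℝ H]
    [CompleteSpace H]
    (P : ℝ → H →L[ℝ] H) (t₀ : ℝ) (c : ℝ) (hc : 0 < c)
    (hlip : ∀ t, ‖P t - P t₀‖ ≤ c * |t - t₀|)
    (η : ℝ → ℝ) (hη : Filter.Tendsto η (nhdsWithin 0 (Set.Ioi 0)) Filter.atTop)
    (hgap : ∀ t, t ≠ t₀ → ∀ v ∈ (LinearMap.ker (P t : H →ₗ[ℝ] H))ᗮ,
      |t - t₀| * η |t - t₀| * ‖v‖ ≤ ‖P t v‖)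
    (f₀ : H) (hf₀ : f₀ ∈ LinearMap.ker (P t₀ : H →ₗ[ℝ] H))
    (u v ψ : ℝ → H) (hu : ∀ t, ‖u t - f₀‖ ≤ c * |t - t₀|)
    (hdecomp : ∀ t, u t = v t + ψ t)
    (hψ : ∀ t, ψ t ∈ LinearMap.ker (P t : H →ₗ[ℝ] H))
    (hv : ∀ t, v t ∈ (LinearMap.ker (P t : H →ₗ[ℝ] H))ᗮ) :
    Filter.Tendsto (fun t => ‖v t‖) (nhds t₀) (nhds 0) ∧
      Filter.Tendsto (fun t => ‖f₀ - ψ t‖) (nhds t₀) (nhds 0) := by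
  -- value at t₀
  have hut₀ : u t₀ = f₀ := by
    have h := hu t₀
    simp only [sub_self, abs_zero, mul_zero] at h
    have := le_antisymm h (norm_nonneg _)
    rwa [norm_eq_zero, sub_eq_zero] at this
  have hvt₀ : v t₀ = 0 := by
    have h1 : v t₀ = u t₀ - ψ t₀ := by rw [hdecomp t₀]; abel
    have h2 : v t₀ ∈ LinearMap.ker (P t₀ : H →ₗ[ℝ] H) := by
      rw [h1, hut₀]; exact Submodule.sub_mem _ hf₀ (hψ t₀)
    have h3 := (Submodule.mem_orthogonal _ _).mp (hv t₀) _ h2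
    rwa [inner_self_eq_zero] at h3
  set K : ℝ := c * (‖f₀‖ + c) + ‖P t₀‖ * c with hK
  have habs0 : Filter.Tendsto (fun t => |t - t₀|) (nhds t₀) (nhds 0) := by
    have h : Filter.Tendsto (fun t => t - t₀) (nhds t₀) (nhds (t₀ - t₀)) :=
      Filter.Tendsto.sub Filter.tendsto_id tendsto_const_nhds
    have h2 := h.abs
    simpa using h2
  -- tendsto of |t - t₀| to 0 within Ioi 0, along punctured nbhd
  have habs : Filter.Tendsto (fun t => |t - t₀|) (nhdsWithin t₀ {t₀}ᶜ)
      (nhdsWithin 0 (Set.Ioi 0)) := by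
    rw [tendsto_nhdsWithin_iff]
    constructor
    · exact habs0.mono_left nhdsWithin_le_nhds
    · filter_upwards [self_mem_nhdsWithin] with t ht
      exact abs_pos.mpr (sub_ne_zero.mpr ht)
  have hηt : Filter.Tendsto (fun t => η |t - t₀|) (nhdsWithin t₀ {t₀}ᶜ)
      Filter.atTop := hη.comp habs
  -- key bound
  have hbound : ∀ᶠ t in nhdsWithin t₀ {t₀}ᶜ, ‖v t‖ ≤ K / η |t - t₀| := by
    have h1 : ∀ᶠ t in nhdsWithin t₀ {t₀}ᶜ, (1:ℝ) ≤ η |t - t₀| :=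
      hηt.eventually_ge_atTop 1
    have h2 : ∀ᶠ t in nhdsWithin t₀ {t₀}ᶜ, |t - t₀| ≤ 1 :=
      Filter.Eventually.filter_mono nhdsWithin_le_nhds
        (habs0.eventually_le_const one_pos)
    filter_upwards [h1, h2, self_mem_nhdsWithin] with t hη1 ht1 htne
    have hne : t ≠ t₀ := htne
    have hpos : (0:ℝ) < |t - t₀| := abs_pos.mpr (sub_ne_zero.mpr hne)
    have hut : ‖u t‖ ≤ ‖f₀‖ + c := by
      have e : u t = f₀ + (u t - f₀) := by abel
      calc ‖u t‖ = ‖f₀ + (u t - f₀)‖ := by rw [← e]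
        _ ≤ ‖f₀‖ + ‖u t - f₀‖ := norm_add_le _ _
        _ ≤ ‖f₀‖ + c * |t - t₀| := by linarith [hu t]
        _ ≤ ‖f₀‖ + c := by nlinarith
    have hPv : P t (v t) = P t (u t) := by
      have : P t (u t) = P t (v t) + P t (ψ t) := by
        rw [hdecomp t]; exact map_add _ _ _
      rw [this, (show P t (ψ t) = 0 from LinearMap.mem_ker.mp (hψ t)), add_zero]
    have hPu : ‖P t (u t)‖ ≤ |t - t₀| * K := by
      have e1 : P t (u t) = (P t - P t₀) (u t) + P t₀ (u t - f₀) := by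
        have : P t₀ f₀ = 0 := LinearMap.mem_ker.mp hf₀
        simp [ContinuousLinearMap.sub_apply, map_sub, this]
      have a1 : ‖(P t - P t₀) (u t)‖ ≤ (c * |t - t₀|) * (‖f₀‖ + c) :=
        le_trans (ContinuousLinearMap.le_opNorm _ _)
          (mul_le_mul (hlip t) hut (norm_nonneg _) (by positivity))
      have a2 : ‖P t₀ (u t - f₀)‖ ≤ ‖P t₀‖ * (c * |t - t₀|) :=
        le_trans (ContinuousLinearMap.le_opNorm _ _)
          (mul_le_mul_of_nonneg_left (hu t) (norm_nonneg _))
      calc ‖P t (u t)‖ = ‖(P t - P t₀) (u t) + P t₀ (u t - f₀)‖ := by rw [← e1]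
        _ ≤ ‖(P t - P t₀) (u t)‖ + ‖P t₀ (u t - f₀)‖ := norm_add_le _ _
        _ ≤ (c * |t - t₀|) * (‖f₀‖ + c) + ‖P t₀‖ * (c * |t - t₀|) := by linarith
        _ = |t - t₀| * K := by rw [hK]; ring
    have hg := hgap t hne (v t) (hv t)
    rw [hPv] at hg
    have h4 : |t - t₀| * (η |t - t₀| * ‖v t‖) ≤ |t - t₀| * K := by
      calc |t - t₀| * (η |t - t₀| * ‖v t‖)
          = |t - t₀| * η |t - t₀| * ‖v t‖ := by ring
        _ ≤ ‖P t (u t)‖ := hg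
        _ ≤ |t - t₀| * K := hPu
    have h5 : η |t - t₀| * ‖v t‖ ≤ K := le_of_mul_le_mul_left h4 hpos
    rw [le_div_iff₀ (by linarith : (0:ℝ) < η |t - t₀|), mul_comm]
    exact h5
  have hKη : Filter.Tendsto (fun t => K / η |t - t₀|) (nhdsWithin t₀ {t₀}ᶜ)
      (nhds 0) := Filter.Tendsto.div_atTop tendsto_const_nhds hηt
  have hv0' : Filter.Tendsto (fun t => ‖v t‖) (nhdsWithin t₀ {t₀}ᶜ) (nhds 0) :=
    squeeze_zero' (Filter.Eventually.of_forall fun t => norm_nonneg _) hbound hKη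
  have hv0 : Filter.Tendsto (fun t => ‖v t‖) (nhds t₀) (nhds 0) := by
    rw [← nhdsNE_sup_pure t₀, Filter.tendsto_sup]
    refine ⟨hv0', ?_⟩
    have hp : Filter.Tendsto (fun t => ‖v t‖) (pure t₀ : Filter ℝ) (nhds ‖v t₀‖) :=
      tendsto_pure_nhds _ t₀
    simpa [hvt₀] using hp
  refine ⟨hv0, ?_⟩
  have hle0 : ∀ t, ‖f₀ - u t‖ ≤ c * |t - t₀| := fun t => by
    rw [norm_sub_rev]; exact hu t
  have huf : Filter.Tendsto (fun t => ‖f₀ - u t‖) (nhds t₀) (nhds 0) :=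
    squeeze_zero (fun t => norm_nonneg _) hle0 (by simpa using habs0.const_mul c)
  have hle : ∀ t, ‖f₀ - ψ t‖ ≤ ‖f₀ - u t‖ + ‖v t‖ := by
    intro t
    have e : f₀ - ψ t = (f₀ - u t) + v t := by rw [hdecomp t]; abel
    rw [e]; exact norm_add_le _ _
  exact squeeze_zero (fun t => norm_nonneg _) hle (by simpa using huf.add hv0)
end
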